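/- Let I be an instance with types satisfying the supply condition and let J ∈ A_γ(Q(I), h) for some signpost sequence γ. Then the greedy & parity correction algorithm terminates and its output E_J satisfies the type parity condition (A) and the party proportionality condition (B). In particular, the greedy & parity correction mechanism M^G is a valid apportionment mechanism over the instances satisfying the supply condition. -/

import Mathlib

open Finset

/-- A signpost sequence: `γ 0 = 0`, `γ n ∈ [n-1, n]` for `n ≥ 1`, and the
disjunction property. -/
def Signpost (γ : ℕ → ℝ) : Prop :=
  γ 0 = 0 ∧
  (∀ n : ℕ, 1 ≤ n → ((n : ℝ) - 1 ≤ γ n ∧ γ n ≤ n)) ∧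
  ((∃ k : ℕ, 2 ≤ k ∧ γ k = (k : ℝ) - 1) → ∀ l : ℕ, 1 ≤ l → γ l < l) ∧
  ((∃ k : ℕ, 1 ≤ k ∧ γ k = (k : ℝ)) → ∀ l : ℕ, 2 ≤ l → (l : ℝ) - 1 < γ l)

/-- The rounding rule `R_γ` of a signpost sequence, as a set-valued map:
`R_γ(0) = {0}`, `R_γ(t) = {n}` for `t ∈ (γ n, γ (n+1))`, and
`R_γ(t) = {n-1, n}` when `t = γ n > 0`. -/
def roundSet (γ : ℕ → ℝ) (t : ℝ) : Set ℕ :=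
  {k | (t = 0 ∧ k = 0) ∨ (γ k < t ∧ t < γ (k + 1)) ∨ (0 < t ∧ (t = γ k ∨ t = γ (k + 1)))}

/-- The divisor method solution set `A_γ(Q, h)`. -/
def divisorSet (γ : ℕ → ℝ) {n : ℕ} (Q : Fin n → ℝ) (h : ℕ) : Set (Fin n → ℕ) :=
  {S | (∑ i, S i) = h ∧ ∃ lam : ℝ, 0 < lam ∧ ∀ i, S i ∈ roundSet γ (Q i / lam)}

/-- The two candidate types. -/
inductive MType
  | f | m
deriving DecidableEq

instance : Fintype MType :=
  ⟨{MType.f, MType.m}, fun x => by cases x <;> simp⟩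

/-- The other type. -/
def MType.other : MType → MType
  | .f => .m
  | .m => .f

/-- An instance of the apportionment problem with type parity: a finite candidate
set `C`, a party map, a (nonnegative real) vote map, a type map, a house size
`h ≥ 1` and a total order (the field `ord`) refining the votes. -/
structure TypedInstance (n : ℕ) (C : Type) [Fintype C] [DecidableEq C] where
  ord : LinearOrder C
  party : C → Fin n
  votes : C → ℝ
  votes_nonneg : ∀ c, 0 ≤ votes c
  mtype : C → MType
  h : ℕ
  h_pos : 1 ≤ h
  refines : ∀ c c' : C, votes c' < votes c → ord.lt c' c

namespace TypedInstance

variable {n : ℕ} {C : Type} [Fintype C] [DecidableEq C]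

/-- The candidates of party `i`. -/
def Ci (I : TypedInstance n C) (i : Fin n) : Finset C :=
  univ.filter fun c => I.party c = i

/-- The candidates of type `t`. -/
def Ct (I : TypedInstance n C) (t : MType) : Finset C :=
  univ.filter fun c => I.mtype c = t

/-- The candidates of party `i` and type `t`. -/
def Cit (I : TypedInstance n C) (i : Fin n) (t : MType) : Finset C :=
  univ.filter fun c => I.party c = i ∧ I.mtype c = t

/-- The party vote totals `Q(I)`. -/
def Q (I : TypedInstance n C) : Fin n → ℝ := fun i => ∑ c ∈ I.Ci i, I.votes c

/-- The party × type vote totals `P(I)`. -/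
def P (I : TypedInstance n C) : Fin n → MType → ℝ := fun i t => ∑ c ∈ I.Cit i t, I.votes c

/-- The supply matrix `S(I)`. -/
def S (I : TypedInstance n C) : Fin n → MType → ℕ := fun i t => (I.Cit i t).card

/-- The supply condition: `|C_i^t| ≥ ⌈h/2⌉` for every party `i` and type `t`. -/
def SupplyCond (I : TypedInstance n C) : Prop :=
  ∀ (i : Fin n) (t : MType), (I.h + 1) / 2 ≤ (I.Cit i t).card

/-- Type parity condition (A): the numbers of elected candidates of the two types
differ by exactly `h mod 2`. Allocations are represented by the finset of elected
candidates. -/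
def CondA (I : TypedInstance n C) (E : Finset C) : Prop :=
  (((E.filter fun c => I.mtype c = MType.f).card : ℤ) -
    ((E.filter fun c => I.mtype c = MType.m).card : ℤ)).natAbs = I.h % 2

instance (I : TypedInstance n C) (E : Finset C) : Decidable (I.CondA E) := by
  unfold CondA; infer_instance

/-- The number of elected candidates of each party. -/
def partyCount (I : TypedInstance n C) (E : Finset C) : Fin n → ℕ :=
  fun i => (E.filter fun c => I.party c = i).card

/-- The number of elected candidates of each type. -/
def typeCount (I : TypedInstance n C) (E : Finset C) : MType → ℕ :=
  fun t => (E.filter fun c => I.mtype c = t).card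

/-- Party proportionality condition (B) w.r.t. a signpost sequence `γ`. -/
def CondB (I : TypedInstance n C) (γ : ℕ → ℝ) (E : Finset C) : Prop :=
  ∃ J ∈ divisorSet γ I.Q I.h, ∀ i, I.partyCount E i = J i

/-- The set `X(I, γ)` of feasible allocations. -/
def X (I : TypedInstance n C) (γ : ℕ → ℝ) : Set (Finset C) :=
  {E | I.CondA E ∧ I.CondB γ E}

/-- The polytope `Z(I, J, γ)` of fractional allocations. -/
def Z (I : TypedInstance n C) (J : Fin n → ℕ) : Set (Fin n → MType → ℝ) :=
  {y | (∀ t : MType, ((I.h / 2 : ℕ) : ℝ) ≤ ∑ i, y i t) ∧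
       (∀ i : Fin n, y i MType.f + y i MType.m = (J i : ℝ)) ∧
       (∀ (i : Fin n) (t : MType), 0 ≤ y i t ∧ y i t ≤ ((I.Cit i t).card : ℝ))}

/-- The scaled instance `αI` (same candidate order). -/
def scale (I : TypedInstance n C) (α : ℝ) (hα : 0 < α) : TypedInstance n C where
  ord := I.ord
  party := I.party
  votes := fun c => α * I.votes c
  votes_nonneg := fun c => mul_nonneg hα.le (I.votes_nonneg c)
  mtype := I.mtype
  h := I.h
  h_pos := I.h_pos
  refines := fun c c' hlt => I.refines c c' (lt_of_mul_lt_mul_left hlt hα.le)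

/-- `G` is a voting increment of `I` in candidate `c`: identical to `I` except
that `c` garners strictly more votes. -/
def VotingIncrement (I G : TypedInstance n C) (c : C) : Prop :=
  G.party = I.party ∧ G.mtype = I.mtype ∧ G.h = I.h ∧
  I.votes c < G.votes c ∧ ∀ c' : C, c' ≠ c → G.votes c' = I.votes c'

/-- The rank of a candidate in the order `≻`: position `1` is the top candidate. -/
def rank (I : TypedInstance n C) (c : C) : ℕ :=
  letI := I.ord
  (univ.filter fun c' => c ≤ c').card

/-- The top `k` candidates of a subset `D` according to the order of `I`. -/
def topOf (I : TypedInstance n C) (D : Finset C) (k : ℕ) : Finset C :=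
  letI := I.ord
  D.filter fun c => (D.filter fun c' => c ≤ c').card ≤ k

/-- The type-oblivious solution `T_J`: in every party `i`, the top `J i`
candidates of `C_i` are elected. -/
def oblivious (I : TypedInstance n C) (J : Fin n → ℕ) : Finset C :=
  univ.filter fun c => c ∈ I.topOf (I.Ci (I.party c)) (J (I.party c))

/-- The over-represented type of an allocation (type `f` in case of a tie). -/
def overType (I : TypedInstance n C) (E : Finset C) : MType :=
  if I.typeCount E MType.m ≤ I.typeCount E MType.f then MType.f else MType.m

/-- One parity-correction swap: the worst-ranked elected candidate of the
over-represented type is replaced by the best-ranked unelected candidate of the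
same party and of the under-represented type (if any; otherwise nothing happens). -/
def swapStep (I : TypedInstance n C) (E : Finset C) : Finset C :=
  letI := I.ord
  let t := I.overType E
  let elected := E.filter fun c => I.mtype c = t
  if hE : elected.Nonempty then
    let s := elected.min' hE
    let pool := univ.filter fun c => c ∉ E ∧ I.party c = I.party s ∧ I.mtype c = t.other
    if hp : pool.Nonempty then insert (pool.max' hp) (E.erase s) else E
  else E

/-- The parity-correction loop (with fuel). -/
def greedyAux (I : TypedInstance n C) : ℕ → Finset C → Finset C
  | 0, E => E
  | k + 1, E => if I.CondA E then E else greedyAux I k (I.swapStep E)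

/-- The output `E_J` of the greedy & parity correction algorithm. -/
def greedy (I : TypedInstance n C) (J : Fin n → ℕ) : Finset C :=
  greedyAux I I.h (I.oblivious J)

/-- The greedy & parity correction mechanism `M^G`. -/
def MG (I : TypedInstance n C) (γ : ℕ → ℝ) : Set (Finset C) :=
  {E | ∃ J ∈ divisorSet γ I.Q I.h, E = I.greedy J}

/-- Two allocations agree on all candidates of rank at most `l`. -/
def agreeUpTo (I : TypedInstance n C) (E₁ E₂ : Finset C) (l : ℕ) : Prop :=
  ∀ c : C, I.rank c ≤ l → (c ∈ E₁ ↔ c ∈ E₂)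

instance (I : TypedInstance n C) (E₁ E₂ : Finset C) (l : ℕ) :
    Decidable (I.agreeUpTo E₁ E₂ l) := by
  unfold agreeUpTo; infer_instance

/-- The length of the common prefix of two allocations (w.r.t. the ranking). -/
def prefixLen (I : TypedInstance n C) (E₁ E₂ : Finset C) : ℕ :=
  ((Finset.range (Fintype.card C + 1)).filter fun l => I.agreeUpTo E₁ E₂ l).sup id

/-- The vote-leading type (type `f` in case of a tie; this tie-breaking rule is
scaling invariant). -/
noncomputable def voteLeading (I : TypedInstance n C) : MType :=
  if (∑ c ∈ I.Ct MType.f, I.votes c) < (∑ c ∈ I.Ct MType.m, I.votes c) then MType.m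
  else MType.f

/-- The parity marginal `φ(I)`: for even `h` both types get `h/2`; for odd `h` the
vote-leading type gets `⌈h/2⌉`. -/
noncomputable def parityMarginal (I : TypedInstance n C) : MType → ℕ :=
  fun t => if t = I.voteLeading then (I.h + 1) / 2 else I.h / 2

end TypedInstance

/-- `(x, lam, mu)` is a `δ`-biproportional solution of the two-dimensional
instance with supply `(P, S, J, φ)`. -/
def IsBipropSol (δ : ℕ → ℝ) {n : ℕ} (P : Fin n → MType → ℝ) (S : Fin n → MType → ℕ)
    (J : Fin n → ℕ) (φ : MType → ℕ) (x : Fin n → MType → ℕ)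
    (lam : Fin n → ℝ) (mu : MType → ℝ) : Prop :=
  (∀ i, 0 < lam i) ∧ (∀ t, 0 < mu t) ∧
  (∀ (i : Fin n) (t : MType), x i t < S i t → x i t ∈ roundSet δ (P i t * lam i * mu t)) ∧
  (∀ i : Fin n, x i MType.f + x i MType.m = J i) ∧
  (∀ t : MType, (∑ i, x i t) = φ t) ∧
  (∀ (i : Fin n) (t : MType), x i t ≤ S i t)

/-- The set `B_δ(P, S, J, φ)` of `δ`-biproportional solutions. -/
def bipropSet (δ : ℕ → ℝ) {n : ℕ} (P : Fin n → MType → ℝ) (S : Fin n → MType → ℕ)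
    (J : Fin n → ℕ) (φ : MType → ℕ) : Set (Fin n → MType → ℕ) :=
  {x | ∃ lam mu, IsBipropSol δ P S J φ x lam mu}

/-- `δ`-biproportional solutions of a two-dimensional instance `(P, J, φ)`
without supply bounds. -/
def IsBipropSolNS (δ : ℕ → ℝ) {n : ℕ} (P : Fin n → MType → ℝ)
    (J : Fin n → ℕ) (φ : MType → ℕ) (x : Fin n → MType → ℕ)
    (lam : Fin n → ℝ) (mu : MType → ℝ) : Prop :=
  (∀ i, 0 < lam i) ∧ (∀ t, 0 < mu t) ∧
  (∀ (i : Fin n) (t : MType), x i t ∈ roundSet δ (P i t * lam i * mu t)) ∧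
  (∀ i : Fin n, x i MType.f + x i MType.m = J i) ∧
  (∀ t : MType, (∑ i, x i t) = φ t)

/-- The set `B_δ(P, J, φ)` for instances without supply bounds. -/
def bipropSetNS (δ : ℕ → ℝ) {n : ℕ} (P : Fin n → MType → ℝ)
    (J : Fin n → ℕ) (φ : MType → ℕ) : Set (Fin n → MType → ℕ) :=
  {x | ∃ lam mu, IsBipropSolNS δ P J φ x lam mu}

/-- `F` is a fair share (matrix scaling) of the two-dimensional instance
`(P, J, φ)`. -/
def IsFairShare {n : ℕ} (P : Fin n → MType → ℝ) (J : Fin n → ℕ) (φ : MType → ℕ)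
    (F : Fin n → MType → ℝ) : Prop :=
  ∃ (lam : Fin n → ℝ) (mu : MType → ℝ),
    (∀ i, 0 < lam i) ∧ (∀ t, 0 < mu t) ∧ (∀ i t, 0 < F i t) ∧
    (∀ (i : Fin n) (t : MType), F i t = P i t * lam i * mu t) ∧
    (∀ i : Fin n, F i MType.f + F i MType.m = (J i : ℝ)) ∧
    (∀ t : MType, (∑ i, F i t) = (φ t : ℝ))

namespace TypedInstance

variable {n : ℕ} {C : Type} [Fintype C] [DecidableEq C]

/-- The allocation `E_x` electing, for every party `i` and type `t`, the top
`x i t` candidates of `C_i^t`. -/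
def allocOf (I : TypedInstance n C) (x : Fin n → MType → ℕ) : Finset C :=
  univ.filter fun c =>
    c ∈ I.topOf (I.Cit (I.party c) (I.mtype c)) (x (I.party c) (I.mtype c))

/-- The `δ`-biproportional parity mechanism `M^B_δ`. -/
def MB (I : TypedInstance n C) (δ γ : ℕ → ℝ) : Set (Finset C) :=
  {E | ∃ J ∈ divisorSet γ I.Q I.h,
        ∃ x ∈ bipropSet δ I.P I.S J I.parityMarginal, E = I.allocOf x}

end TypedInstance
section Aux
namespace TypedInstance

variable {n : ℕ} {C : Type} [Fintype C] [DecidableEq C]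

lemma typeCount_add (I : TypedInstance n C) (E : Finset C) :
    I.typeCount E MType.f + I.typeCount E MType.m = E.card := by
  classical
  have hpq : ∀ c : C, (I.mtype c = MType.m) = ¬(I.mtype c = MType.f) := by
    intro c; cases h : I.mtype c <;> simp
  simp only [typeCount, hpq]
  exact Finset.card_filter_add_card_filter_not _

lemma sum_partyCount (I : TypedInstance n C) (E : Finset C) :
    ∑ i, I.partyCount E i = E.card :=
  (Finset.card_eq_sum_card_fiberwise (f := I.party) (t := Finset.univ)
    (fun c _ => Finset.mem_univ _)).symm

lemma card_Ci_split (I : TypedInstance n C) (i : Fin n) :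
    (I.Cit i MType.f).card + (I.Cit i MType.m).card = (I.Ci i).card := by
  classical
  have h1 : I.Cit i MType.f = (I.Ci i).filter fun c => I.mtype c = MType.f := by
    ext c; simp [Cit, Ci, and_assoc]
  have h2 : I.Cit i MType.m = (I.Ci i).filter fun c => ¬(I.mtype c = MType.f) := by
    ext c
    simp only [Cit, Ci, Finset.mem_filter, Finset.mem_univ, true_and, and_assoc]
    constructor
    · rintro ⟨hp, ht⟩; exact ⟨hp, by rw [ht]; simp⟩
    · rintro ⟨hp, ht⟩
      refine ⟨hp, ?_⟩
      cases h : I.mtype c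
      · exact absurd h ht
      · rfl
  rw [h1, h2, Finset.card_filter_add_card_filter_not]

lemma topOf_subset (I : TypedInstance n C) (D : Finset C) (k : ℕ) : I.topOf D k ⊆ D := by
  letI := I.ord
  exact Finset.filter_subset _ _

lemma card_topOf (I : TypedInstance n C) (D : Finset C) (k : ℕ) (hk : k ≤ D.card) :
    (I.topOf D k).card = k := by
  classical
  letI := I.ord
  set r : C → ℕ := fun c => (D.filter fun c' => c ≤ c').card with hr
  have key : ∀ a b : C, a ∈ D → a < b → r b < r a := by
    intro a b ha hab
    have h1 : (D.filter fun c' => b ≤ c') ⊆ (D.filter fun c' => a ≤ c') := by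
      intro c hc
      rw [Finset.mem_filter] at hc ⊢
      exact ⟨hc.1, le_trans hab.le hc.2⟩
    have h2 : a ∈ D.filter fun c' => a ≤ c' := Finset.mem_filter.mpr ⟨ha, le_refl a⟩
    have h3 : a ∉ D.filter fun c' => b ≤ c' := fun hx =>
      absurd ((Finset.mem_filter.mp hx).2) (not_le.mpr hab)
    exact Finset.card_lt_card ((Finset.ssubset_iff_of_subset h1).mpr ⟨a, h2, h3⟩)
  have hinj : Set.InjOn r D := by
    intro a ha b hb hab
    by_contra hne
    rcases lt_or_gt_of_ne hne with h | h
    · have := key a b ha h; omega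
    · have := key b a hb h; omega
  have himg : D.image r ⊆ Finset.Icc 1 D.card := by
    intro v hv
    rcases Finset.mem_image.mp hv with ⟨c, hc, rfl⟩
    rw [Finset.mem_Icc]
    constructor
    · exact Finset.card_pos.mpr ⟨c, Finset.mem_filter.mpr ⟨hc, le_refl c⟩⟩
    · exact Finset.card_le_card (Finset.filter_subset _ _)
  have himg_eq : D.image r = Finset.Icc 1 D.card := by
    apply Finset.eq_of_subset_of_card_le himg
    rw [Finset.card_image_of_injOn hinj, Nat.card_Icc]
    omega
  have htop : I.topOf D k = D.filter fun c => r c ≤ k := rfl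
  rw [htop]
  have h2 : (D.filter fun c => r c ≤ k).card = ((D.filter fun c => r c ≤ k).image r).card :=
    (Finset.card_image_of_injOn (hinj.mono (Finset.coe_subset.mpr (Finset.filter_subset _ _)))).symm
  have h3 : (D.filter fun c => r c ≤ k).image r = (D.image r).filter fun v => v ≤ k := by
    ext v
    simp only [Finset.mem_image, Finset.mem_filter]
    constructor
    · rintro ⟨c, ⟨hc, hck⟩, rfl⟩
      exact ⟨⟨c, hc, rfl⟩, hck⟩
    · rintro ⟨⟨c, hc, rfl⟩, hv⟩
      exact ⟨c, ⟨hc, hv⟩, rfl⟩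
  have h4 : (Finset.Icc 1 D.card).filter (fun v => v ≤ k) = Finset.Icc 1 k := by
    ext v
    simp only [Finset.mem_filter, Finset.mem_Icc]
    omega
  rw [h2, h3, himg_eq, h4, Nat.card_Icc]
  omega

lemma partyCount_oblivious (I : TypedInstance n C) (J : Fin n → ℕ) (i : Fin n)
    (hJ : J i ≤ (I.Ci i).card) : I.partyCount (I.oblivious J) i = J i := by
  classical
  have hfo : (I.oblivious J).filter (fun c => I.party c = i) = I.topOf (I.Ci i) (J i) := by
    ext c
    simp only [oblivious, Finset.mem_filter, Finset.mem_univ, true_and]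
    constructor
    · rintro ⟨hc, hp⟩; rwa [hp] at hc
    · intro hc
      have hp : I.party c = i := by
        have hcD : c ∈ I.Ci i := I.topOf_subset _ _ hc
        simpa [Ci] using hcD
      exact ⟨by rwa [hp], hp⟩
  show ((I.oblivious J).filter (fun c => I.party c = i)).card = J i
  rw [hfo]
  exact I.card_topOf _ _ hJ

lemma card_filter_swap {E : Finset C} {s b : C} (hs : s ∈ E) (hb : b ∉ E)
    (p : C → Prop) [DecidablePred p] :
    ((insert b (E.erase s)).filter p).card + (if p s then 1 else 0)
      = (E.filter p).card + (if p b then 1 else 0) := by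
  classical
  by_cases hpb : p b
  · rw [if_pos hpb, Finset.filter_insert, if_pos hpb, Finset.filter_erase,
      Finset.card_insert_of_notMem
        (fun hmem => hb (Finset.mem_of_mem_filter _ (Finset.mem_of_mem_erase hmem)))]
    by_cases hps : p s
    · rw [if_pos hps, Finset.card_erase_of_mem (Finset.mem_filter.mpr ⟨hs, hps⟩)]
      have : 1 ≤ (E.filter p).card :=
        Finset.card_pos.mpr ⟨s, Finset.mem_filter.mpr ⟨hs, hps⟩⟩
      omega
    · rw [if_neg hps, Finset.erase_eq_of_notMem
        (fun hmem => hps (Finset.mem_filter.mp hmem).2)]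
  · rw [if_neg hpb, Finset.filter_insert, if_neg hpb, Finset.filter_erase]
    by_cases hps : p s
    · rw [if_pos hps, Finset.card_erase_of_mem (Finset.mem_filter.mpr ⟨hs, hps⟩)]
      have : 1 ≤ (E.filter p).card :=
        Finset.card_pos.mpr ⟨s, Finset.mem_filter.mpr ⟨hs, hps⟩⟩
      omega
    · rw [if_neg hps, Finset.erase_eq_of_notMem
        (fun hmem => hps (Finset.mem_filter.mp hmem).2)]

lemma swap_core (I : TypedInstance n C) {E : Finset C} {s b : C}
    (hs : s ∈ E) (hb : b ∉ E) (hparty : I.party b = I.party s)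
    {t : MType} (hts : I.mtype s = t) (htb : I.mtype b = t.other) :
    (∀ j, I.partyCount (insert b (E.erase s)) j = I.partyCount E j) ∧
    (I.typeCount (insert b (E.erase s)) t + 1 = I.typeCount E t) ∧
    (I.typeCount (insert b (E.erase s)) t.other = I.typeCount E t.other + 1) := by
  classical
  have hoth : ¬ (t.other = t) := by cases t <;> simp [MType.other]
  refine ⟨?_, ?_, ?_⟩
  · intro j
    have hcf := card_filter_swap hs hb (fun c => I.party c = j)
    show ((insert b (E.erase s)).filter fun c => I.party c = j).card
      = (E.filter fun c => I.party c = j).card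
    by_cases hj : I.party s = j
    · rw [if_pos hj, if_pos (hparty.trans hj)] at hcf; omega
    · rw [if_neg hj, if_neg (fun h => hj (hparty.symm.trans h))] at hcf; omega
  · have hcf := card_filter_swap hs hb (fun c => I.mtype c = t)
    have hbt : ¬ I.mtype b = t := by rw [htb]; exact hoth
    rw [if_pos hts, if_neg hbt] at hcf
    show ((insert b (E.erase s)).filter fun c => I.mtype c = t).card + 1
      = (E.filter fun c => I.mtype c = t).card
    omega
  · have hcf := card_filter_swap hs hb (fun c => I.mtype c = t.other)
    have hst : ¬ I.mtype s = t.other := by rw [hts]; exact fun h => hoth h.symm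
    rw [if_neg hst, if_pos htb] at hcf
    show ((insert b (E.erase s)).filter fun c => I.mtype c = t.other).card
      = (E.filter fun c => I.mtype c = t.other).card + 1
    omega

lemma pool_nonempty (I : TypedInstance n C) (hsup : I.SupplyCond) (E : Finset C)
    {t : MType} (s : C)
    (hu2 : 2 * I.typeCount E t.other + 2 ≤ I.h) :
    (Finset.univ.filter fun c =>
      c ∉ E ∧ I.party c = I.party s ∧ I.mtype c = t.other).Nonempty := by
  classical
  by_contra hemp
  have hsub : I.Cit (I.party s) t.other ⊆ E.filter fun c => I.mtype c = t.other := by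
    intro c hc
    simp only [Cit, Finset.mem_filter, Finset.mem_univ, true_and] at hc
    rcases hc with ⟨hp, ht⟩
    have hcE : c ∈ E := by
      by_contra hcE
      exact hemp ⟨c, Finset.mem_filter.mpr ⟨Finset.mem_univ c, hcE, hp, ht⟩⟩
    exact Finset.mem_filter.mpr ⟨hcE, ht⟩
  have h1 := hsup (I.party s) t.other
  have h2 := Finset.card_le_card hsub
  have h3 : (E.filter fun c => I.mtype c = t.other).card = I.typeCount E t.other := rfl
  omega

lemma swapStep_props (I : TypedInstance n C) (hsup : I.SupplyCond) (E : Finset C)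
    (hcard : E.card = I.h) (hA : ¬ I.CondA E) :
    (∀ j, I.partyCount (I.swapStep E) j = I.partyCount E j) ∧
    ((I.typeCount (I.swapStep E) MType.f : ℤ) - I.typeCount (I.swapStep E) MType.m).natAbs + 2
      = ((I.typeCount E MType.f : ℤ) - I.typeCount E MType.m).natAbs := by
  classical
  letI := I.ord
  have hA' : ((I.typeCount E MType.f : ℤ) - I.typeCount E MType.m).natAbs ≠ I.h % 2 := hA
  have hfm : I.typeCount E MType.f + I.typeCount E MType.m = I.h := by
    rw [I.typeCount_add E, hcard]
  have hd2 : 2 ≤ ((I.typeCount E MType.f : ℤ) - I.typeCount E MType.m).natAbs := by omega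
  have hover : ∃ t : MType, I.overType E = t ∧
      I.typeCount E t.other + 2 ≤ I.typeCount E t := by
    unfold overType
    by_cases hle : I.typeCount E MType.m ≤ I.typeCount E MType.f
    · exact ⟨MType.f, if_pos hle, by simp only [MType.other]; omega⟩
    · exact ⟨MType.m, if_neg hle, by simp only [MType.other]; omega⟩
  obtain ⟨t, hT, hover⟩ := hover
  have hu2 : 2 * I.typeCount E t.other + 2 ≤ I.h := by
    have : I.typeCount E t + I.typeCount E t.other = I.h := by
      cases t <;> simp only [MType.other] <;> omega
    omega
  unfold swapStep
  simp only [hT]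
  split_ifs with hE hp
  · obtain ⟨hsE, hst⟩ := Finset.mem_filter.mp (Finset.min'_mem _ hE)
    have hbm := Finset.max'_mem _ hp
    simp only [Finset.mem_filter, Finset.mem_univ, true_and] at hbm
    obtain ⟨hbE, hbp, hbt⟩ := hbm
    obtain ⟨hPc, hTc1, hTc2⟩ := I.swap_core hsE hbE hbp hst hbt
    refine ⟨hPc, ?_⟩
    cases t
    · simp only [MType.other] at *
      omega
    · simp only [MType.other] at *
      omega
  · exact absurd (I.pool_nonempty hsup E _ hu2) hp
  · exfalso
    apply hE
    apply Finset.card_pos.mp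
    show 0 < I.typeCount E t
    omega

lemma greedyAux_good (I : TypedInstance n C) (hsup : I.SupplyCond)
    (J : Fin n → ℕ) (hJh : ∑ i, J i = I.h) :
    ∀ (k : ℕ) (E : Finset C), (∀ i, I.partyCount E i = J i) →
      ((I.typeCount E MType.f : ℤ) - I.typeCount E MType.m).natAbs ≤ I.h % 2 + 2 * k →
      (∀ i, I.partyCount (I.greedyAux k E) i = J i) ∧ I.CondA (I.greedyAux k E) := by
  intro k
  induction k with
  | zero =>
    intro E hE hdiff
    have hcard : E.card = I.h := by
      rw [← I.sum_partyCount E, ← hJh]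
      exact Finset.sum_congr rfl fun i _ => hE i
    have hfm : I.typeCount E MType.f + I.typeCount E MType.m = I.h := by
      rw [I.typeCount_add E, hcard]
    have hg : I.greedyAux 0 E = E := rfl
    rw [hg]
    refine ⟨hE, ?_⟩
    show ((I.typeCount E MType.f : ℤ) - I.typeCount E MType.m).natAbs = I.h % 2
    omega
  | succ k ih =>
    intro E hE hdiff
    have hg : I.greedyAux (k + 1) E
        = if I.CondA E then E else I.greedyAux k (I.swapStep E) := rfl
    by_cases hA : I.CondA E
    · rw [hg, if_pos hA]; exact ⟨hE, hA⟩
    · rw [hg, if_neg hA]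
      have hcard : E.card = I.h := by
        rw [← I.sum_partyCount E, ← hJh]
        exact Finset.sum_congr rfl fun i _ => hE i
      obtain ⟨hP, hD⟩ := I.swapStep_props hsup E hcard hA
      apply ih
      · intro i; rw [hP i]; exact hE i
      · omega

lemma greedy_good (I : TypedInstance n C) (hsup : I.SupplyCond)
    (γ : ℕ → ℝ) (J : Fin n → ℕ) (hJ : J ∈ divisorSet γ I.Q I.h) :
    I.CondA (I.greedy J) ∧ I.CondB γ (I.greedy J) := by
  have hJh : ∑ i, J i = I.h := hJ.1
  have hJle : ∀ i, J i ≤ I.h := fun i =>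
    hJh ▸ Finset.single_le_sum (f := J) (fun _ _ => Nat.zero_le _) (Finset.mem_univ i)
  have hCi : ∀ i, J i ≤ (I.Ci i).card := by
    intro i
    have h1 := hsup i MType.f
    have h2 := hsup i MType.m
    have h3 := I.card_Ci_split i
    have h4 := hJle i
    have h5 := I.h_pos
    omega
  have hob : ∀ i, I.partyCount (I.oblivious J) i = J i :=
    fun i => I.partyCount_oblivious J i (hCi i)
  have hcard : (I.oblivious J).card = I.h := by
    rw [← I.sum_partyCount (I.oblivious J), ← hJh]
    exact Finset.sum_congr rfl fun i _ => hob i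
  have hfm : I.typeCount (I.oblivious J) MType.f + I.typeCount (I.oblivious J) MType.m
      = I.h := by
    rw [I.typeCount_add, hcard]
  obtain ⟨hP, hA⟩ := I.greedyAux_good hsup J hJh I.h (I.oblivious J) hob (by omega)
  exact ⟨hA, J, hJ, hP⟩

end TypedInstance
end Aux

/-- the greedy & parity correction algorithm outputs a solution
satisfying (A) and (B); in particular `M^G` is a valid apportionment mechanism
over the instances satisfying the supply condition. -/
theorem stmt6 {n : ℕ} {C : Type} [Fintype C] [DecidableEq C]
    (γ : ℕ → ℝ) (hγ : Signpost γ)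
    (I : TypedInstance n C) (hsup : I.SupplyCond)
    (J : Fin n → ℕ) (hJ : J ∈ divisorSet γ I.Q I.h) :
    (I.CondA (I.greedy J) ∧ I.CondB γ (I.greedy J)) ∧
    (I.MG γ ⊆ I.X γ) ∧ ((I.X γ).Nonempty → (I.MG γ).Nonempty) := by
  refine ⟨I.greedy_good hsup γ J hJ, ?_, ?_⟩
  · intro E hE
    obtain ⟨J', hJ', rfl⟩ := hE
    exact I.greedy_good hsup γ J' hJ'
  · rintro ⟨E, hE⟩
    obtain ⟨J', hJ', -⟩ := hE.2
    exact ⟨I.greedy J', J', hJ', rfl⟩
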